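/- Let f, g ∈ Aut(T) be conjugate by a finite-state automorphism h (i.e. h⁻¹fh = g with h finite-state). Then f has finite orbit-signalizer if and only if g has finite orbit-signalizer. -/

import Mathlib

open List

/-- Vertices of the rooted `d`-ary tree `T`: finite words over the alphabet
`X = Fin d`. -/
abbrev Vertex (d : ℕ) := List (Fin d)

/-- `g` is an automorphism of the rooted `d`-ary tree: a bijection of the
vertex set `X*` preserving word length and the prefix relation. -/
def IsTreeAut {d : ℕ} (g : Equiv.Perm (Vertex d)) : Prop :=
  (∀ v : Vertex d, (g v).length = v.length) ∧
    ∀ v w : Vertex d, g v <+: g (v ++ w)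

theorem IsTreeAut.prefix_mono {d : ℕ} {g : Equiv.Perm (Vertex d)} (hg : IsTreeAut g)
    {u u' : Vertex d} (h : u <+: u') : g u <+: g u' := by
  obtain ⟨t, rfl⟩ := h
  exact hg.2 u t

/-- The automorphism group `Aut(T)` of the rooted `d`-ary tree, as a subgroup
of the group of permutations of the vertex set. -/
def treeAut (d : ℕ) : Subgroup (Equiv.Perm (Vertex d)) where
  carrier := {g | IsTreeAut g}
  one_mem' := ⟨fun _ => rfl, fun v w => ⟨w, rfl⟩⟩
  mul_mem' := by
    intro g h hg hh
    obtain ⟨hg1, hg2⟩ := hg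
    obtain ⟨hh1, hh2⟩ := hh
    refine ⟨fun v => ?_, fun v w => ?_⟩
    · simp [Equiv.Perm.mul_apply, hg1, hh1]
    · obtain ⟨t, ht⟩ := hh2 v w
      simp only [Equiv.Perm.mul_apply]
      rw [← ht]
      exact hg2 (h v) t
  inv_mem' := by
    intro g hgmem
    obtain ⟨hg1, hg2⟩ := hgmem
    have hg : IsTreeAut g := ⟨hg1, hg2⟩
    have hlen' : ∀ v : Vertex d, (g⁻¹ v).length = v.length := by
      intro v
      conv_rhs => rw [← (show g (g⁻¹ v) = v from g.apply_symm_apply v)]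
      rw [hg1]
    refine ⟨hlen', fun v w => ?_⟩
    have hle : (g⁻¹ v).length ≤ (g⁻¹ (v ++ w)).length := by
      have h1 := hlen' v
      have h2 := hlen' (v ++ w)
      rw [List.length_append] at h2
      omega
    have htp : (g⁻¹ (v ++ w)).take (g⁻¹ v).length <+: g⁻¹ (v ++ w) :=
      List.take_prefix _ _
    have hgtp : g ((g⁻¹ (v ++ w)).take (g⁻¹ v).length) <+: v ++ w := by
      have := hg.prefix_mono htp
      rwa [(show g (g⁻¹ (v ++ w)) = v ++ w from g.apply_symm_apply _)] at this
    have hlen_tp : (g ((g⁻¹ (v ++ w)).take (g⁻¹ v).length)).length = v.length := by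
      rw [hg1, List.length_take, min_eq_left hle, hlen' v]
    have hveq : g ((g⁻¹ (v ++ w)).take (g⁻¹ v).length) = v := by
      have h1 := List.prefix_iff_eq_take.mp hgtp
      have h2 := List.prefix_iff_eq_take.mp (List.prefix_append v w)
      rw [h1, hlen_tp]
      exact h2.symm
    have hkey : (g⁻¹ (v ++ w)).take (g⁻¹ v).length = g⁻¹ v := by
      apply g.injective
      rw [hveq, (show g (g⁻¹ v) = v from g.apply_symm_apply v)]
    rw [← hkey]
    exact htp

open scoped Classical in
/-- The state (section) `g|_v` of `g` at the vertex `v` : the unique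
automorphism satisfying `g (v ++ w) = g v ++ (g|_v) w` for all `w`. -/
noncomputable def state {d : ℕ} (g : Equiv.Perm (Vertex d)) (v : Vertex d) :
    Equiv.Perm (Vertex d) :=
  if h : Function.Bijective (fun w : Vertex d => (g (v ++ w)).drop v.length) then
    Equiv.ofBijective _ h
  else 1

/-- A finite-state automorphism: one having finitely many states.  The
finite-state automorphisms form the group `F(X)`. -/
def FiniteState {d : ℕ} (g : Equiv.Perm (Vertex d)) : Prop :=
  (Set.range fun v : Vertex d => state g v).Finite

/-- The cardinality of the orbit `Orb_a(v)` of the vertex `v` under the cyclic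
group generated by `a`. -/
noncomputable def orbitCard {d : ℕ} (a : Equiv.Perm (Vertex d)) (v : Vertex d) : ℕ :=
  Nat.card (Set.range fun n : ℤ => (a ^ n) v)

/-- The orbit-signalizer `OS(a) = { a^m|_v : v ∈ X^*, m = |Orb_a(v)| }`. -/
noncomputable def OS {d : ℕ} (a : Equiv.Perm (Vertex d)) : Set (Equiv.Perm (Vertex d)) :=
  {s | ∃ v : Vertex d, s = state (a ^ orbitCard a v) v}

/-- `a` has finite orbit-signalizer. -/
def FiniteOS {d : ℕ} (a : Equiv.Perm (Vertex d)) : Prop := (OS a).Finite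

/-- A self-similar (state-closed) subgroup. -/
def SelfSimilar {d : ℕ} (G : Subgroup (Equiv.Perm (Vertex d))) : Prop :=
  ∀ g ∈ G, ∀ v : Vertex d, state g v ∈ G

/-- A contracting group: there is a finite set `N ⊆ G` such that every
`g ∈ G` has all its states in `N` from some level on. -/
def ContractingGroup {d : ℕ} (G : Subgroup (Equiv.Perm (Vertex d))) : Prop :=
  ∃ N : Set (Equiv.Perm (Vertex d)), N.Finite ∧ N ⊆ (G : Set (Equiv.Perm (Vertex d))) ∧
    ∀ g ∈ G, ∃ n : ℕ, ∀ v : Vertex d, n ≤ v.length → state g v ∈ N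

/-- A contracting automorphism: the self-similar group generated by all of its
states is contracting. -/
def ContractingAut {d : ℕ} (f : Equiv.Perm (Vertex d)) : Prop :=
  ContractingGroup (Subgroup.closure (Set.range fun v : Vertex d => state f v))

/-- The activity sequence `θ_k(g)`: the number of vertices `v` of level `k`
whose state `g|_v` acts nontrivially on the first level `X`. -/
noncomputable def theta {d : ℕ} (g : Equiv.Perm (Vertex d)) (k : ℕ) : ℕ :=
  Nat.card {v : Vertex d // v.length = k ∧ ∃ x : Fin d, state g v [x] ≠ [x]}

/-- A bounded automorphism: a finite-state automorphism with bounded activity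
sequence.  The bounded automorphisms form the group `Pol(0)`. -/
def BoundedAut {d : ℕ} (g : Equiv.Perm (Vertex d)) : Prop :=
  FiniteState g ∧ ∃ C : ℕ, ∀ k : ℕ, theta g k ≤ C

/-- A polynomial automorphism (an element of `Pol(∞)`): a finite-state
automorphism whose activity sequence is polynomially bounded. -/
def PolyAut {d : ℕ} (g : Equiv.Perm (Vertex d)) : Prop :=
  FiniteState g ∧ ∃ p : Polynomial ℕ, ∀ k : ℕ, theta g k ≤ p.eval k

/-- A finitary automorphism (an element of `Pol(-1)`): all states at some
level are trivial. -/
def Finitary {d : ℕ} (g : Equiv.Perm (Vertex d)) : Prop :=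
  ∃ k : ℕ, ∀ v : Vertex d, v.length = k → state g v = 1

/-- A functionally recursive automorphism: a member of some finitely generated
self-similar subgroup of `Aut(T)`.  These form the group `FR(X)`. -/
def FunctionallyRecursive {d : ℕ} (g : Equiv.Perm (Vertex d)) : Prop :=
  ∃ G : Subgroup (Equiv.Perm (Vertex d)), G ≤ treeAut d ∧ SelfSimilar G ∧
    (∃ S : Set (Equiv.Perm (Vertex d)), S.Finite ∧ G = Subgroup.closure S) ∧ g ∈ G

section Aux

variable {d : ℕ}

private lemma key_decomp {g : Equiv.Perm (Vertex d)} (hg : IsTreeAut g) (v w : Vertex d) :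
    g (v ++ w) = g v ++ (g (v ++ w)).drop v.length := by
  obtain ⟨t, ht⟩ := hg.2 v w
  rw [← ht]
  congr 1
  rw [← hg.1 v, List.drop_left]

private lemma state_bijective {g : Equiv.Perm (Vertex d)} (hg : g ∈ treeAut d) (v : Vertex d) :
    Function.Bijective (fun w : Vertex d => (g (v ++ w)).drop v.length) := by
  have hg' : IsTreeAut g := hg
  have hginv : IsTreeAut g⁻¹ := (treeAut d).inv_mem hg
  constructor
  · intro w1 w2 hw
    have h1 := key_decomp hg' v w1
    have h2 := key_decomp hg' v w2
    simp only at hw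
    rw [hw] at h1
    have : g (v ++ w1) = g (v ++ w2) := by rw [h1, ← h2]
    have := g.injective this
    exact List.append_cancel_left this
  · intro u
    have hp : g⁻¹ (g v) <+: g⁻¹ (g v ++ u) := hginv.prefix_mono (List.prefix_append _ _)
    rw [show g⁻¹ (g v) = v from g.symm_apply_apply v] at hp
    obtain ⟨t, ht⟩ := hp
    refine ⟨t, ?_⟩
    have hvw : g (v ++ t) = g v ++ u := by
      rw [ht, show g (g⁻¹ (g v ++ u)) = g v ++ u from g.apply_symm_apply _]
    simp only [hvw, ← hg'.1 v, List.drop_left]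

private lemma state_apply {g : Equiv.Perm (Vertex d)} (hg : g ∈ treeAut d) (v w : Vertex d) :
    state g v w = (g (v ++ w)).drop v.length := by
  rw [state, dif_pos (state_bijective hg v)]
  rfl

private lemma state_spec {g : Equiv.Perm (Vertex d)} (hg : g ∈ treeAut d) (v w : Vertex d) :
    g (v ++ w) = g v ++ state g v w := by
  rw [state_apply hg]
  exact key_decomp hg v w

private lemma state_mul {g h : Equiv.Perm (Vertex d)} (hg : g ∈ treeAut d) (hh : h ∈ treeAut d)
    (v : Vertex d) : state (g * h) v = state g (h v) * state h v := by
  refine Equiv.ext fun w => ?_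
  rw [Equiv.Perm.mul_apply]
  have hgh : g * h ∈ treeAut d := (treeAut d).mul_mem hg hh
  have e1 : (g * h) (v ++ w) = (g * h) v ++ state (g * h) v w := state_spec hgh v w
  have e2 : (g * h) (v ++ w) = (g * h) v ++ state g (h v) (state h v w) := by
    simp only [Equiv.Perm.mul_apply]
    rw [state_spec hh v w, state_spec hg (h v) (state h v w)]
  rw [e2] at e1
  exact (List.append_cancel_left e1.symm)

private lemma state_one (v : Vertex d) : state (1 : Equiv.Perm (Vertex d)) v = 1 := by
  refine Equiv.ext fun w => ?_
  rw [state_apply (treeAut d).one_mem v w]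
  simp [List.drop_left]

private lemma state_inv {h : Equiv.Perm (Vertex d)} (hh : h ∈ treeAut d) (v : Vertex d) :
    state h⁻¹ v = (state h (h⁻¹ v))⁻¹ := by
  have := state_mul hh ((treeAut d).inv_mem hh) v
  rw [mul_inv_cancel, state_one] at this
  exact eq_inv_of_mul_eq_one_right this.symm

private lemma orbit_finite {f : Equiv.Perm (Vertex d)} (hf : f ∈ treeAut d) (u : Vertex d) :
    (Set.range fun n : ℤ => (f ^ n) u).Finite := by
  apply (List.finite_length_eq (Fin d) u.length).subset
  rintro _ ⟨n, rfl⟩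
  have : f ^ n ∈ treeAut d := (treeAut d).zpow_mem hf n
  exact this.1 u

private lemma pow_orbitCard_apply {f : Equiv.Perm (Vertex d)} (hf : f ∈ treeAut d)
    (u : Vertex d) : (f ^ orbitCard f u) u = u := by
  classical
  set S : Set (Vertex d) := Set.range fun n : ℤ => (f ^ n) u with hSdef
  have hSfin : S.Finite := orbit_finite hf u
  haveI := hSfin.to_subtype
  -- find a positive period
  obtain ⟨i, j, hij, hEq⟩ := Finite.exists_ne_map_eq_of_infinite
    (fun n : ℤ => (⟨(f ^ n) u, Set.mem_range_self n⟩ : S))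
  have hEq' : (f ^ i) u = (f ^ j) u := congrArg Subtype.val hEq
  have hfix : (f ^ (i - j)) u = u := by
    have : (f ^ (i - j)) u = (f ^ (-j)) ((f ^ i) u) := by
      rw [← Equiv.Perm.mul_apply, ← zpow_add]
      ring_nf
    rw [this, hEq', ← Equiv.Perm.mul_apply, ← zpow_add]
    simp
  have hfix' : (f ^ (-(i - j))) u = u := by
    rw [zpow_neg]
    conv_lhs => rw [← hfix]
    simp
  have hfixN : (f ^ (i - j).natAbs) u = u := by
    rw [← zpow_natCast]
    rcases Int.natAbs_eq (i - j) with hcase | hcase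
    · rw [← hcase]; exact hfix
    · rw [show (((i - j).natAbs : ℤ)) = -(i - j) by omega]; exact hfix'
  have hpos : 0 < (i - j).natAbs := Int.natAbs_pos.mpr (sub_ne_zero.mpr hij)
  set p := MulAction.period f u with hp
  have hppos : 0 < p := MulAction.period_pos_of_fixed hpos hfixN
  have hpfix : (f ^ p) u = u := MulAction.pow_period_smul f u
  -- S equals the image of Finset.range p
  have hSeq : S = ((Finset.range p).image fun k : ℕ => (f ^ k) u : Finset (Vertex d)) := by
    ext x
    simp only [Finset.coe_image, Finset.coe_range, Set.mem_image, Set.mem_Iio, hSdef,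
      Set.mem_range]
    constructor
    · rintro ⟨n, rfl⟩
      refine ⟨(n % (p : ℤ)).toNat, ?_, ?_⟩
      · have h1 : 0 ≤ n % (p : ℤ) := Int.emod_nonneg n (by exact_mod_cast hppos.ne')
        have h2 : n % (p : ℤ) < p := Int.emod_lt_of_pos n (by exact_mod_cast hppos)
        omega
      · have h1 : 0 ≤ n % (p : ℤ) := Int.emod_nonneg n (by exact_mod_cast hppos.ne')
        have hsplit : n = (p : ℤ) * (n / p) + n % p := (Int.mul_ediv_add_emod n p).symm
        have hq : ((f ^ (p : ℤ)) ^ (n / (p : ℤ))) u = u := by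
          apply Equiv.Perm.zpow_apply_eq_self_of_apply_eq_self
          simpa [zpow_natCast] using hpfix
        calc (f ^ ((n % (p : ℤ)).toNat)) u
            = (f ^ ((n % (p : ℤ)))) u := by rw [← zpow_natCast, Int.toNat_of_nonneg h1]
          _ = (f ^ (n % (p : ℤ))) (((f ^ (p : ℤ)) ^ (n / (p : ℤ))) u) := by rw [hq]
          _ = (f ^ n) u := by
              rw [← Equiv.Perm.mul_apply, ← zpow_mul, ← zpow_add, Int.emod_add_mul_ediv]
    · rintro ⟨k, _, rfl⟩
      exact ⟨(k : ℤ), by rw [zpow_natCast]⟩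
  -- that image has cardinality p
  have hinj : Set.InjOn (fun k : ℕ => (f ^ k) u) (Finset.range p : Set ℕ) := by
    have key : ∀ a b : ℕ, a < b → b < p → (f ^ a) u = (f ^ b) u → False := by
      intro a b hlt hbp hab
      have h2 : (f ^ (b - a)) u = u := by
        apply (f ^ a).injective
        rw [← Equiv.Perm.mul_apply, ← pow_add, show a + (b - a) = b from by omega]
        exact hab.symm
      exact MulAction.pow_smul_ne_of_lt_period (m := f) (a := u) (n := b - a) (by omega) (by omega) h2
    intro a ha b hb hab
    simp only [Finset.coe_range, Set.mem_Iio] at ha hb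
    simp only at hab
    rcases lt_trichotomy a b with hlt | heq | hgt
    · exact absurd hab (fun hx => key a b hlt hb hx)
    · exact heq
    · exact absurd hab.symm (fun hx => key b a hgt ha hx)
  have hcard : orbitCard f u = p := by
    rw [orbitCard, ← hSdef, hSeq]
    rw [Nat.card_coe_set_eq, Set.ncard_coe_finset,
      Finset.card_image_of_injOn (by simpa using hinj), Finset.card_range]
  rw [hcard]
  exact hpfix

private lemma orbitCard_conj {f h : Equiv.Perm (Vertex d)} (u : Vertex d) :
    orbitCard (h * f * h⁻¹) (h u) = orbitCard f u := by
  have : (Set.range fun n : ℤ => ((h * f * h⁻¹) ^ n) (h u))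
      = h '' (Set.range fun n : ℤ => (f ^ n) u) := by
    ext x
    simp only [Set.mem_range, Set.mem_image, conj_zpow]
    constructor
    · rintro ⟨n, rfl⟩
      exact ⟨(f ^ n) u, ⟨n, rfl⟩, by simp [Equiv.Perm.mul_apply]⟩
    · rintro ⟨y, ⟨n, rfl⟩, rfl⟩
      exact ⟨n, by simp [Equiv.Perm.mul_apply]⟩
  rw [orbitCard, this, Nat.card_image_of_injective h.injective, orbitCard]

private lemma finiteOS_of_conj {f g h : Equiv.Perm (Vertex d)}
    (hf : f ∈ treeAut d) (hh : h ∈ treeAut d)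
    (hfs : FiniteState h) (hconj : h * f * h⁻¹ = g) (hFf : FiniteOS f) : FiniteOS g := by
  have himage : OS g ⊆ (fun p : Equiv.Perm (Vertex d) × Equiv.Perm (Vertex d) =>
      p.1 * p.2 * p.1⁻¹) '' ((Set.range fun v : Vertex d => state h v) ×ˢ OS f) := by
    rintro s ⟨v, rfl⟩
    set u := h⁻¹ v with hu
    have hv : v = h u := by rw [hu, show h (h⁻¹ v) = v from h.apply_symm_apply v]
    have hm : orbitCard g v = orbitCard f u := by
      rw [hv, ← hconj, orbitCard_conj]
    set m := orbitCard g v with hmdef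
    have hfm : f ^ m ∈ treeAut d := (treeAut d).pow_mem hf m
    have hgm : g ^ m = h * f ^ m * h⁻¹ := by rw [← hconj, conj_pow]
    have hfmu : (f ^ m) u = u := by rw [hm]; exact pow_orbitCard_apply hf u
    have e1 : state (g ^ m) v
        = state h ((f ^ m * h⁻¹) v) * state (f ^ m * h⁻¹) v := by
      rw [hgm, mul_assoc, state_mul hh ((treeAut d).mul_mem hfm ((treeAut d).inv_mem hh))]
    have e2 : state (f ^ m * h⁻¹) v = state (f ^ m) (h⁻¹ v) * state h⁻¹ v :=
      state_mul hfm ((treeAut d).inv_mem hh) v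
    have e3 : state h⁻¹ v = (state h u)⁻¹ := state_inv hh v
    have e4 : (f ^ m * h⁻¹) v = u := by
      rw [Equiv.Perm.mul_apply, ← hu, hfmu]
    refine ⟨(state h u, state (f ^ m) u), ⟨⟨u, rfl⟩, ⟨u, by rw [← hm]⟩⟩, ?_⟩
    simp only
    rw [e1, e2, e3, e4, ← hu, mul_assoc]
  exact ((hfs.prod hFf).image _).subset himage

private lemma finiteState_inv {h : Equiv.Perm (Vertex d)} (hh : h ∈ treeAut d)
    (hfs : FiniteState h) : FiniteState h⁻¹ := by
  apply (hfs.image fun s => s⁻¹).subset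
  rintro _ ⟨v, rfl⟩
  exact ⟨state h (h⁻¹ v), ⟨h⁻¹ v, rfl⟩, (state_inv hh v).symm⟩

end Aux

/-- If `f, g ∈ Aut(T)` are conjugate by a finite-state
automorphism, then `f` has finite orbit-signalizer if and only if `g` does. -/
theorem finiteOS_iff_of_conj_by_finiteState
    (d : ℕ) (hd : 2 ≤ d) (f g h : Equiv.Perm (Vertex d))
    (hf : IsTreeAut f) (hg : IsTreeAut g) (hh : IsTreeAut h)
    (hfs : FiniteState h) (hconj : h * f * h⁻¹ = g) :
    FiniteOS f ↔ FiniteOS g := by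
  have hfm : f ∈ treeAut d := hf
  have hgm : g ∈ treeAut d := hg
  have hhm : h ∈ treeAut d := hh
  constructor
  · exact finiteOS_of_conj hfm hhm hfs hconj
  · intro hFg
    have hconj' : h⁻¹ * g * h⁻¹⁻¹ = f := by
      rw [← hconj]; group
    exact finiteOS_of_conj hgm ((treeAut d).inv_mem hhm) (finiteState_inv hhm hfs) hconj' hFg
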